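/- Let G be a group and let P, L, U, K be subgroups of G such that U is normal in P, P = LU, L ∩ U = {1}, G = PK, and K ∩ P = (K ∩ L)(K ∩ U); let N be a normal subgroup of K. Let (σ, V) be a representation of L and σ̃ : P → GL(V) its inflation to P (σ̃(ℓu) = σ(ℓ)). Put Q := K ∩ P and W := {v ∈ V : σ̃(q)v = v for all q ∈ Q ∩ N}. Then the space {f ∈ Ind_P^G V : f(xn) = f(x) for all x ∈ G, n ∈ N} is stable under the right-translation action of K, the subgroup N acts trivially on it, and as a representation of K/N it is isomorphic to Ind_{QN/N}^{K/N} W, where QN/N acts on W by qN ↦ σ̃(q)|_W (a well-defined representation). -/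
import Mathlib


/-- The subspace of `N`-invariants in `Ind_P^G V`: functions `f : G → V` with
`f (p * g) = σ p (f g)` for `p ∈ P` and `f (x * n) = f x` for `n ∈ N`. -/
def InvIndG {G : Type*} [Group G] {V : Type*} [AddCommGroup V] [Module ℂ V]
    (P N : Subgroup G) (σ : G → (Module.End ℂ V)ˣ) : Submodule ℂ (G → V) where
  carrier := {f | (∀ p ∈ P, ∀ g : G, f (p * g) = (σ p : Module.End ℂ V) (f g)) ∧
    (∀ x : G, ∀ n ∈ N, f (x * n) = f x)}
  add_mem' := by
    intro a b ha hb
    exact ⟨fun p hp g => by simp only [Pi.add_apply, ha.1 p hp g, hb.1 p hp g, map_add],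
      fun x n hn => by simp only [Pi.add_apply, ha.2 x n hn, hb.2 x n hn]⟩
  zero_mem' := ⟨fun p hp g => by simp, fun x n hn => rfl⟩
  smul_mem' := by
    intro c a ha
    exact ⟨fun p hp g => by simp only [Pi.smul_apply, ha.1 p hp g, map_smul],
      fun x n hn => by simp only [Pi.smul_apply, ha.2 x n hn]⟩

/-- The fixed-vector subspace `W = {v ∈ V : σ q v = v for all q ∈ Q ∩ N}`,
where `Q = K ∩ P`. -/
def WSub {G : Type*} [Group G] {V : Type*} [AddCommGroup V] [Module ℂ V]
    (K P N : Subgroup G) (σ : G → (Module.End ℂ V)ˣ) : Submodule ℂ V where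
  carrier := {v | ∀ q : G, q ∈ K → q ∈ P → q ∈ N → (σ q : Module.End ℂ V) v = v}
  add_mem' := by
    intro a b ha hb q hK hP hN
    simp only [map_add, ha q hK hP hN, hb q hK hP hN]
  zero_mem' := by intro q hK hP hN; simp
  smul_mem' := by
    intro c a ha q hK hP hN
    simp only [map_smul, ha q hK hP hN]

/-- A concrete model for `Ind_{QN/N}^{K/N} W` (with `Q = K ∩ P`), realized as the space
of functions `F : K → V` taking values in `W` that are `Q`-equivariant on the left and
`N`-invariant on the right; such functions are exactly the pullbacks along `K → K/N`
of elements of `Ind_{QN/N}^{K/N} W`. -/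
def QIndK {G : Type*} [Group G] {V : Type*} [AddCommGroup V] [Module ℂ V]
    (K P N : Subgroup G) (σ : G → (Module.End ℂ V)ˣ) : Submodule ℂ (↥K → V) where
  carrier := {F | (∀ x : ↥K, F x ∈ WSub K P N σ) ∧
    (∀ q x : ↥K, (q : G) ∈ P → F (q * x) = (σ (q : G) : Module.End ℂ V) (F x)) ∧
    (∀ x n : ↥K, (n : G) ∈ N → F (x * n) = F x)}
  add_mem' := by
    intro a b ha hb
    exact ⟨fun x => Submodule.add_mem _ (ha.1 x) (hb.1 x),
      fun q x hq => by simp only [Pi.add_apply, ha.2.1 q x hq, hb.2.1 q x hq, map_add],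
      fun x n hn => by simp only [Pi.add_apply, ha.2.2 x n hn, hb.2.2 x n hn]⟩
  zero_mem' :=
    ⟨fun x => Submodule.zero_mem _, fun q x hq => by simp, fun x n hn => rfl⟩
  smul_mem' := by
    intro c a ha
    exact ⟨fun x => Submodule.smul_mem _ _ (ha.1 x),
      fun q x hq => by simp only [Pi.smul_apply, ha.2.1 q x hq, map_smul],
      fun x n hn => by simp only [Pi.smul_apply, ha.2.2 x n hn]⟩

/-- with `U ⊴ P`, `P = LU`, `L ∩ U = 1`, `G = PK`,
`K ∩ P = (K∩L)(K∩U)`, `N ⊴ K`, and `σ` a representation of `L` inflated to `P`,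
the `N`-invariants of `Ind_P^G V` are `K`-stable with trivial `N`-action, the action
`qN ↦ σ(q)|_W` of `QN/N` on `W` is well defined, and as a representation of `K/N` the
space of `N`-invariants is isomorphic to `Ind_{QN/N}^{K/N} W`. -/
theorem statement2 {G : Type*} [Group G] {V : Type*} [AddCommGroup V] [Module ℂ V]
    (P L U K N : Subgroup G)
    (hUP : U ≤ P) (hLP : L ≤ P)
    (hUnormal : ∀ p ∈ P, ∀ u ∈ U, p * u * p⁻¹ ∈ U)
    (hPLU : ∀ p ∈ P, ∃ l ∈ L, ∃ u ∈ U, p = l * u)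
    (hLU : ∀ x : G, x ∈ L → x ∈ U → x = 1)
    (hIwasawa : ∀ g : G, ∃ p ∈ P, ∃ k ∈ K, g = p * k)
    (hKP : ∀ q : G, q ∈ K → q ∈ P →
      ∃ l, l ∈ K ∧ l ∈ L ∧ ∃ u, u ∈ K ∧ u ∈ U ∧ q = l * u)
    (hNK : N ≤ K)
    (hNnormal : ∀ k ∈ K, ∀ n ∈ N, k * n * k⁻¹ ∈ N)
    (σ : G → (Module.End ℂ V)ˣ)
    (hσone : σ 1 = 1)
    (hσmul : ∀ p ∈ P, ∀ q ∈ P, σ (p * q) = σ p * σ q)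
    (hσinfl : ∀ l ∈ L, ∀ u ∈ U, σ (l * u) = σ l) :
    -- stability under the right-translation action of `K`, and `N` acts trivially
    (∀ f ∈ InvIndG P N σ, ∀ k ∈ K, (fun x => f (x * k)) ∈ InvIndG P N σ) ∧
    (∀ f ∈ InvIndG P N σ, ∀ n ∈ N, (fun x => f (x * n)) = f) ∧
    -- `qN ↦ σ(q)|_W` is a well-defined action of `QN/N` on `W`
    (∀ q : G, q ∈ K → q ∈ P → ∀ v ∈ WSub K P N σ, (σ q : Module.End ℂ V) v ∈ WSub K P N σ) ∧
    (∀ q q' : G, q ∈ K → q ∈ P → q' ∈ K → q' ∈ P → q⁻¹ * q' ∈ N →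
      ∀ v ∈ WSub K P N σ, (σ q : Module.End ℂ V) v = (σ q' : Module.End ℂ V) v) ∧
    -- the `K/N`-equivariant isomorphism given by restriction to `K`
    (∃ e : InvIndG P N σ ≃ₗ[ℂ] QIndK K P N σ,
      (∀ (f : InvIndG P N σ) (x : ↥K), (e f : ↥K → V) x = (f : G → V) x) ∧
      (∀ (f f' : InvIndG P N σ) (k : ↥K),
        ((f' : G → V) = fun g => (f : G → V) (g * (k : G))) →
        ∀ x : ↥K, (e f' : ↥K → V) x = (e f : ↥K → V) (x * k))) := by

  classical
  -- abbreviations for f ∈ InvIndG membership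
  have memInv : ∀ f : G → V, f ∈ InvIndG P N σ ↔
      ((∀ p ∈ P, ∀ g : G, f (p * g) = (σ p : Module.End ℂ V) (f g)) ∧
       (∀ x : G, ∀ n ∈ N, f (x * n) = f x)) := fun f => Iff.rfl
  have memQ : ∀ F : ↥K → V, F ∈ QIndK K P N σ ↔
      ((∀ x : ↥K, F x ∈ WSub K P N σ) ∧
       (∀ q x : ↥K, (q : G) ∈ P → F (q * x) = (σ (q : G) : Module.End ℂ V) (F x)) ∧
       (∀ x n : ↥K, (n : G) ∈ N → F (x * n) = F x)) := fun F => Iff.rfl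
  have memW : ∀ v : V, v ∈ WSub K P N σ ↔
      (∀ q : G, q ∈ K → q ∈ P → q ∈ N → (σ q : Module.End ℂ V) v = v) := fun v => Iff.rfl
  -- part 3 first (used later): W is stable under σ q for q ∈ K ∩ P
  have part3 : ∀ q : G, q ∈ K → q ∈ P → ∀ v ∈ WSub K P N σ,
      (σ q : Module.End ℂ V) v ∈ WSub K P N σ := by
    intro q hqK hqP v hv
    rw [memW]
    intro q' hK' hP' hN'
    have hcN : q⁻¹ * q' * q ∈ N := by
      have := hNnormal q⁻¹ (K.inv_mem hqK) q' hN'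
      simpa using this
    have hcP : q⁻¹ * q' * q ∈ P := mul_mem (mul_mem (P.inv_mem hqP) hP') hqP
    have hcK : q⁻¹ * q' * q ∈ K := mul_mem (mul_mem (K.inv_mem hqK) hK') hqK
    have h1 : q' * q = q * (q⁻¹ * q' * q) := by group
    calc (σ q' : Module.End ℂ V) ((σ q : Module.End ℂ V) v)
        = (σ (q' * q) : Module.End ℂ V) v := by
          rw [hσmul q' hP' q hqP, Units.val_mul, Module.End.mul_apply]
      _ = (σ (q * (q⁻¹ * q' * q)) : Module.End ℂ V) v := by rw [← h1]
      _ = (σ q : Module.End ℂ V) ((σ (q⁻¹ * q' * q) : Module.End ℂ V) v) := by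
          rw [hσmul q hqP _ hcP, Units.val_mul, Module.End.mul_apply]
      _ = (σ q : Module.End ℂ V) v := by rw [hv _ hcK hcP hcN]
  -- key well-definedness lemma for decompositions
  have key : ∀ F : ↥K → V, F ∈ QIndK K P N σ →
      ∀ (p p' k k' : G) (hp : p ∈ P) (hp' : p' ∈ P) (hk : k ∈ K) (hk' : k' ∈ K),
      p * k = p' * k' →
      (σ p : Module.End ℂ V) (F ⟨k, hk⟩) = (σ p' : Module.End ℂ V) (F ⟨k', hk'⟩) := by
    intro F hF p p' k k' hp hp' hk hk' heq
    have h2 : p'⁻¹ * p = k' * k⁻¹ := by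
      have h3 := congrArg (fun x => p'⁻¹ * x * k⁻¹) heq
      simpa [mul_assoc] using h3
    have hqP : p'⁻¹ * p ∈ P := mul_mem (P.inv_mem hp') hp
    have hqK : p'⁻¹ * p ∈ K := by rw [h2]; exact mul_mem hk' (K.inv_mem hk)
    have h4 : p = p' * (p'⁻¹ * p) := by group
    have h5 : (⟨p'⁻¹ * p, hqK⟩ * ⟨k, hk⟩ : ↥K) = ⟨k', hk'⟩ := by
      ext
      show p'⁻¹ * p * k = k'
      rw [h2]; group
    calc (σ p : Module.End ℂ V) (F ⟨k, hk⟩)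
        = (σ (p' * (p'⁻¹ * p)) : Module.End ℂ V) (F ⟨k, hk⟩) := by rw [← h4]
      _ = (σ p' : Module.End ℂ V) ((σ (p'⁻¹ * p) : Module.End ℂ V) (F ⟨k, hk⟩)) := by
          rw [hσmul p' hp' _ hqP, Units.val_mul, Module.End.mul_apply]
      _ = (σ p' : Module.End ℂ V) (F (⟨p'⁻¹ * p, hqK⟩ * ⟨k, hk⟩)) := by
          rw [hF.2.1 ⟨p'⁻¹ * p, hqK⟩ ⟨k, hk⟩ hqP]
      _ = (σ p' : Module.End ℂ V) (F ⟨k', hk'⟩) := by rw [h5]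
  -- chosen Iwasawa decomposition
  let pOf : G → G := fun g => (hIwasawa g).choose
  have hpOf : ∀ g, pOf g ∈ P := fun g => (hIwasawa g).choose_spec.1
  let kOf : G → G := fun g => (hIwasawa g).choose_spec.2.choose
  have hkOf : ∀ g, kOf g ∈ K := fun g => (hIwasawa g).choose_spec.2.choose_spec.1
  have hdec : ∀ g, g = pOf g * kOf g := fun g => (hIwasawa g).choose_spec.2.choose_spec.2
  -- extension of F : K → V to G
  let ext : (↥K → V) → (G → V) := fun F g =>
    (σ (pOf g) : Module.End ℂ V) (F ⟨kOf g, hkOf g⟩)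
  have key2 : ∀ F : ↥K → V, F ∈ QIndK K P N σ → ∀ (g p k : G) (hp : p ∈ P) (hk : k ∈ K),
      g = p * k → ext F g = (σ p : Module.End ℂ V) (F ⟨k, hk⟩) := by
    intro F hF g p k hp hk hg
    exact key F hF (pOf g) p (kOf g) k (hpOf g) hp (hkOf g) hk (by rw [← hdec g, hg])
  -- restriction of f : G → V lands in QIndK
  have hres : ∀ f : G → V, f ∈ InvIndG P N σ →
      (fun x : ↥K => f (x : G)) ∈ QIndK K P N σ := by
    intro f hf
    rw [memQ]
    refine ⟨?_, ?_, ?_⟩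
    · intro x
      rw [memW]
      intro q hK hP hN
      have h1 : (x : G)⁻¹ * q * x ∈ N := by
        have := hNnormal (x : G)⁻¹ (K.inv_mem x.2) q hN
        simpa using this
      have h2 : q * x = (x : G) * ((x : G)⁻¹ * q * x) := by group
      rw [← hf.1 q hP (x : G), h2, hf.2 (x : G) _ h1]
    · intro q x hq
      have : ((q * x : ↥K) : G) = (q : G) * (x : G) := rfl
      rw [this, hf.1 (q : G) hq (x : G)]
    · intro x n hn
      have : ((x * n : ↥K) : G) = (x : G) * (n : G) := rfl
      rw [this, hf.2 (x : G) (n : G) hn]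
  -- extension of F ∈ QIndK lands in InvIndG
  have hext : ∀ F : ↥K → V, F ∈ QIndK K P N σ → ext F ∈ InvIndG P N σ := by
    intro F hF
    rw [memInv]
    constructor
    · intro p hp g
      rw [key2 F hF (p * g) (p * pOf g) (kOf g) (mul_mem hp (hpOf g)) (hkOf g)
        (by rw [mul_assoc, ← hdec g]),
        key2 F hF g (pOf g) (kOf g) (hpOf g) (hkOf g) (hdec g),
        hσmul p hp (pOf g) (hpOf g), Units.val_mul, Module.End.mul_apply]
    · intro x n hn
      have h1 : kOf x * n ∈ K := mul_mem (hkOf x) (hNK hn)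
      rw [key2 F hF (x * n) (pOf x) (kOf x * n) (hpOf x) h1
        (by rw [← mul_assoc, ← hdec x]),
        key2 F hF x (pOf x) (kOf x) (hpOf x) (hkOf x) (hdec x)]
      congr 1
      have h2 : (⟨kOf x * n, h1⟩ : ↥K) = ⟨kOf x, hkOf x⟩ * ⟨n, hNK hn⟩ := rfl
      rw [h2, hF.2.2 ⟨kOf x, hkOf x⟩ ⟨n, hNK hn⟩ hn]
  -- ext ∘ restrict = id
  have hleft : ∀ f : G → V, f ∈ InvIndG P N σ →
      ext (fun x : ↥K => f (x : G)) = f := by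
    intro f hf
    funext g
    have := key (fun x : ↥K => f (x : G)) (hres f hf) (pOf g) (pOf g) (kOf g) (kOf g)
      (hpOf g) (hpOf g) (hkOf g) (hkOf g) rfl
    show (σ (pOf g) : Module.End ℂ V) (f (kOf g)) = f g
    rw [← hf.1 (pOf g) (hpOf g) (kOf g), ← hdec g]
  -- restrict ∘ ext = id
  have hright : ∀ F : ↥K → V, F ∈ QIndK K P N σ →
      (fun x : ↥K => ext F (x : G)) = F := by
    intro F hF
    funext x
    show ext F (x : G) = F x
    rw [key2 F hF (x : G) 1 (x : G) (one_mem P) x.2 (by rw [one_mul]), hσone]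
    simp
  refine ⟨?_, ?_, part3, ?_, ?_⟩
  · -- K-stability
    intro f hf k hk
    rw [memInv]
    refine ⟨fun p hp g => ?_, fun x n hn => ?_⟩
    · show f (p * g * k) = _
      rw [mul_assoc]
      exact hf.1 p hp (g * k)
    · show f (x * n * k) = f (x * k)
      have h1 : x * n * k = (x * k) * (k⁻¹ * n * k) := by group
      have h2 : k⁻¹ * n * k ∈ N := by
        have := hNnormal k⁻¹ (K.inv_mem hk) n hn
        simpa using this
      rw [h1, hf.2 (x * k) _ h2]
  · -- N acts trivially
    intro f hf n hn
    funext x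
    exact hf.2 x n hn
  · -- well-definedness of the QN/N-action
    intro q q' hqK hqP hK' hP' hN v hv
    have hcP : q⁻¹ * q' ∈ P := mul_mem (P.inv_mem hqP) hP'
    have hcK : q⁻¹ * q' ∈ K := mul_mem (K.inv_mem hqK) hK'
    have h1 : q' = q * (q⁻¹ * q') := by group
    calc (σ q : Module.End ℂ V) v
        = (σ q : Module.End ℂ V) ((σ (q⁻¹ * q') : Module.End ℂ V) v) := by
          rw [hv _ hcK hcP hN]
      _ = (σ (q * (q⁻¹ * q')) : Module.End ℂ V) v := by
          rw [hσmul q hqP _ hcP, Units.val_mul, Module.End.mul_apply]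
      _ = (σ q' : Module.End ℂ V) v := by rw [← h1]
  · -- the isomorphism
    refine ⟨{ toFun := fun f => ⟨fun x : ↥K => (f : G → V) (x : G), hres f f.2⟩
              invFun := fun F => ⟨ext F, hext F F.2⟩
              map_add' := fun f g => rfl
              map_smul' := fun c f => rfl
              left_inv := fun f => Subtype.ext (hleft f f.2)
              right_inv := fun F => Subtype.ext (hright F F.2) }, ?_, ?_⟩
    · intro f x
      rfl
    · intro f f' k h x
      show (f' : G → V) (x : G) = (f : G → V) ((x * k : ↥K) : G)
      rw [h]
      rfl
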